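/- Let u be a radial function in H²_N(B) on the unit ball B ⊂ ℝ⁴ satisfying the pointwise bound |u(x)| ≤ (−log|x|)^{1/2}/(2√ω₃)·‖Δu‖₂. Then for every natural number k ≥ 1, ∫_B |x|^α |u(x)|^{2k} dx ≤ k! · ε^{1+k} · 4^{−(1+2k)} · ω₃^{1−k} · ‖Δu‖₂^{2k}, where ε = 4/(4+α). -/

import Mathlib

open MeasureTheory

noncomputable def ω₃ : ℝ := 2 * Real.pi ^ 2

lemma omega3_pos : 0 < ω₃ := by unfold ω₃; positivity

lemma image_exp_neg : (fun t : ℝ => Real.exp (-t)) '' Set.Ioi 0 = Set.Ioo 0 1 := by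
  ext x
  constructor
  · rintro ⟨t, ht, rfl⟩
    exact ⟨Real.exp_pos _, Real.exp_lt_one_iff.mpr (by simpa using ht)⟩
  · rintro ⟨hx0, hx1⟩
    exact ⟨-Real.log x, by simpa using Real.log_neg hx0 hx1, by simp [Real.exp_log hx0]⟩

lemma deriv_exp_neg (t : ℝ) :
    HasDerivWithinAt (fun t : ℝ => Real.exp (-t)) (-Real.exp (-t)) (Set.Ioi 0) t := by
  have h : HasDerivAt (fun t : ℝ => Real.exp (-t)) (Real.exp (-t) * (-1)) t :=
    (hasDerivAt_neg t).exp
  simpa using h.hasDerivWithinAt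

lemma inj_exp_neg : Set.InjOn (fun t : ℝ => Real.exp (-t)) (Set.Ioi 0) :=
  fun _ _ _ _ h => neg_injective (Real.exp_injective h)

lemma pullback_eq (s : ℝ) (k : ℕ) (t : ℝ) (_ : t ∈ Set.Ioi (0:ℝ)) :
    |(-Real.exp (-t))| • ((Real.exp (-t)) ^ s * (-Real.log (Real.exp (-t))) ^ k)
      = t ^ ((k+1:ℝ) - 1) * Real.exp (-((s+1) * t)) := by
  rw [abs_neg, abs_of_pos (Real.exp_pos _), smul_eq_mul, Real.log_exp,
    Real.rpow_def_of_pos (Real.exp_pos _), Real.log_exp]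
  have h1 : ((k+1:ℝ) - 1) = (k:ℝ) := by ring
  rw [h1, Real.rpow_natCast, neg_neg, show -((s+1)*t) = -t + -t*s by ring, Real.exp_add]
  ring

lemma key_integral (s : ℝ) (hs : 0 < s) (k : ℕ) :
    ∫ r in Set.Ioo (0:ℝ) 1, r ^ s * (-Real.log r) ^ k
      = (k.factorial : ℝ) / (s + 1) ^ (k + 1) := by
  rw [← image_exp_neg,
    integral_image_eq_integral_abs_deriv_smul measurableSet_Ioi
      (fun t _ => deriv_exp_neg t) inj_exp_neg]
  rw [setIntegral_congr_fun measurableSet_Ioi (pullback_eq s k)]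
  rw [Real.integral_rpow_mul_exp_neg_mul_Ioi (by positivity : (0:ℝ) < (k:ℝ)+1) (by linarith)]
  rw [Real.Gamma_nat_eq_factorial]
  rw [Real.div_rpow (by norm_num) (by linarith), Real.one_rpow,
    ← Real.rpow_natCast (s+1) (k+1)]
  push_cast
  rw [div_mul_eq_mul_div, one_mul]

lemma key_integrable (s : ℝ) (hs : 0 < s) (k : ℕ) :
    IntegrableOn (fun r : ℝ => r ^ s * (-Real.log r) ^ k) (Set.Ioo (0:ℝ) 1) := by
  rw [← image_exp_neg,
    integrableOn_image_iff_integrableOn_abs_deriv_smul measurableSet_Ioi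
      (fun t _ => deriv_exp_neg t) inj_exp_neg]
  have h2 : IntegrableOn (fun t : ℝ => t ^ ((k+1:ℝ)-1) * Real.exp (-((s+1) * t)))
      (Set.Ioi 0) := by
    have h := _root_.integrableOn_rpow_mul_exp_neg_mul_rpow (p := 1) (s := (k+1:ℝ)-1) (b := s+1)
      (by linarith [Nat.cast_nonneg (α := ℝ) k]) zero_lt_one (by linarith)
    exact h.congr_fun (fun t _ => by beta_reduce; rw [Real.rpow_one, neg_mul]) measurableSet_Ioi
  exact h2.congr_fun (fun t ht => (pullback_eq s k t ht).symm) measurableSet_Ioi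

/-- Weighted even-power moment estimate for radial functions in `H²_N(B)` on the unit
ball of `ℝ⁴` satisfying the pointwise bound `|u(r)| ≤ √(-log r)/(2√ω₃) · ‖Δu‖₂`;
here `D = ‖Δu‖₂`, `ε = 4/(4+α)`, and integrals over `B` are in polar coordinates. -/
theorem weighted_even_moment_radial (u : ℝ → ℝ) (α D : ℝ) (k : ℕ)
    (hα : 0 < α) (hk : 1 ≤ k) (hD : 0 ≤ D)
    (hmeas : Measurable u)
    (hbound : ∀ r ∈ Set.Ioo (0:ℝ) 1,
      |u r| ≤ Real.sqrt (-Real.log r) / (2 * Real.sqrt ω₃) * D) :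
    ω₃ * ∫ r in Set.Ioo (0:ℝ) 1, r ^ (α + 3) * (u r) ^ (2 * k) ≤
      (k.factorial : ℝ) * (4 / (4 + α)) ^ (1 + k) / 4 ^ (1 + 2 * k) *
        ω₃ ^ (1 - (k : ℤ)) * D ^ (2 * k) := by
  have hω : 0 < ω₃ := omega3_pos
  set M : ℝ := D ^ (2*k) / (4*ω₃)^k with hM
  have hMnn : 0 ≤ M := by positivity
  -- pointwise bound
  have h1 : ∀ r ∈ Set.Ioo (0:ℝ) 1,
      r ^ (α+3) * (u r) ^ (2*k) ≤ (r ^ (α+3) * (-Real.log r)^k) * M := by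
    intro r hr
    have hlog : 0 ≤ -Real.log r := by
      have := Real.log_nonpos hr.1.le hr.2.le; linarith
    have e1 : (Real.sqrt (-Real.log r) / (2*Real.sqrt ω₃) * D)^(2*k)
        = (-Real.log r)^k * M := by
      rw [mul_pow, div_pow, pow_mul, pow_mul, Real.sq_sqrt hlog, mul_pow,
        Real.sq_sqrt hω.le, hM]
      have h4 : ((2:ℝ)^2 * ω₃)^k = (4*ω₃)^k := by norm_num
      rw [h4]
      field_simp
    have h2 : (u r) ^ (2*k) ≤ (-Real.log r)^k * M := by
      calc (u r) ^ (2*k) = |u r| ^ (2*k) := ((even_two_mul k).pow_abs (u r)).symm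
        _ ≤ (Real.sqrt (-Real.log r) / (2*Real.sqrt ω₃) * D)^(2*k) :=
            pow_le_pow_left₀ (abs_nonneg _) (hbound r hr) _
        _ = (-Real.log r)^k * M := e1
    have hrp : 0 ≤ r ^ (α+3) := Real.rpow_nonneg hr.1.le _
    calc r ^ (α+3) * (u r) ^ (2*k) ≤ r ^ (α+3) * ((-Real.log r)^k * M) :=
          mul_le_mul_of_nonneg_left h2 hrp
      _ = (r ^ (α+3) * (-Real.log r)^k) * M := by ring
  have hs3 : (0:ℝ) < α + 3 := by linarith
  have hint : IntegrableOn (fun r : ℝ => (r ^ (α+3) * (-Real.log r)^k) * M)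
      (Set.Ioo (0:ℝ) 1) := (key_integrable (α+3) hs3 k).mul_const M
  have hmono : ∫ r in Set.Ioo (0:ℝ) 1, r ^ (α+3) * (u r) ^ (2*k)
      ≤ ∫ r in Set.Ioo (0:ℝ) 1, (r ^ (α+3) * (-Real.log r)^k) * M := by
    apply integral_mono_of_nonneg
    · filter_upwards [ae_restrict_mem measurableSet_Ioo] with r hr
      exact mul_nonneg (Real.rpow_nonneg hr.1.le _) ((even_two_mul k).pow_nonneg _)
    · exact hint
    · filter_upwards [ae_restrict_mem measurableSet_Ioo] with r hr
      exact h1 r hr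
  have hval : ∫ r in Set.Ioo (0:ℝ) 1, (r ^ (α+3) * (-Real.log r)^k) * M
      = ((k.factorial : ℝ) / (α+3+1)^(k+1)) * M := by
    rw [integral_mul_const, key_integral (α+3) hs3 k]
  have hfinal : ω₃ * (((k.factorial : ℝ) / (α+3+1)^(k+1)) * M)
      = (k.factorial : ℝ) * (4 / (4 + α)) ^ (1 + k) / 4 ^ (1 + 2 * k) *
        ω₃ ^ (1 - (k : ℤ)) * D ^ (2 * k) := by
    rw [zpow_sub₀ hω.ne', zpow_one, zpow_natCast, hM]
    have h4α : (4:ℝ) + α ≠ 0 := by linarith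
    have e : α + 3 + 1 = 4 + α := by ring
    rw [e]
    rw [div_pow]
    field_simp
    ring
  calc ω₃ * ∫ r in Set.Ioo (0:ℝ) 1, r ^ (α+3) * (u r) ^ (2*k)
      ≤ ω₃ * (((k.factorial : ℝ) / (α+3+1)^(k+1)) * M) := by
        rw [← hval]; exact mul_le_mul_of_nonneg_left hmono hω.le
    _ = _ := hfinal
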